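/- Let V₁ and V₂ be commuting isometries on a complex Hilbert space H, V := V₁V₂, and C := I − V₁V₁* − V₂V₂* + VV*. If λ is a real number with −1 < λ < 1 and λ ≠ 0 such that ker(C − λI) ≠ {0}, then ker(C + λI) ≠ {0}, and moreover the eigenspaces have the same dimension: the ℂ-vector space dimension (Module.rank) of ker(C − λI) equals that of ker(C + λI). -/

import Mathlib

open ContinuousLinearMap
open scoped InnerProductSpace

set_option maxHeartbeats 1000000

/-- Let `V₁, V₂` be commuting isometries on a complex Hilbert space,
`V := V₁V₂`, `C := I − V₁V₁* − V₂V₂* + VV*`. If `r ∈ (−1,1)`, `r ≠ 0`, and `r` is an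
eigenvalue of `C`, then so is `−r`, and the eigenspaces `ker(C − rI)` and `ker(C + rI)`
have the same dimension. -/
theorem stmt13 {H : Type*} [NormedAddCommGroup H] [InnerProductSpace ℂ H] [CompleteSpace H]
    (V₁ V₂ : H →L[ℂ] H)
    (hV₁ : adjoint V₁ ∘L V₁ = 1) (hV₂ : adjoint V₂ ∘L V₂ = 1)
    (hcomm : V₁ ∘L V₂ = V₂ ∘L V₁)
    (C : H →L[ℂ] H)
    (hC : C = 1 - V₁ ∘L adjoint V₁ - V₂ ∘L adjoint V₂
        + (V₁ ∘L V₂) ∘L adjoint (V₁ ∘L V₂))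
    (r : ℝ) (hr₁ : -1 < r) (hr₂ : r < 1) (hr₀ : r ≠ 0)
    (hev : LinearMap.ker ((C - (r : ℂ) • (1 : H →L[ℂ] H) : H →L[ℂ] H) : H →ₗ[ℂ] H) ≠ ⊥) :
    LinearMap.ker ((C + (r : ℂ) • (1 : H →L[ℂ] H) : H →L[ℂ] H) : H →ₗ[ℂ] H) ≠ ⊥ ∧
    Module.rank ℂ ↥(LinearMap.ker ((C - (r : ℂ) • (1 : H →L[ℂ] H) : H →L[ℂ] H) : H →ₗ[ℂ] H)) =
      Module.rank ℂ ↥(LinearMap.ker ((C + (r : ℂ) • (1 : H →L[ℂ] H) : H →L[ℂ] H) : H →ₗ[ℂ] H)) := by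
  have hV₁' : adjoint V₁ * V₁ = 1 := hV₁
  have hV₂' : adjoint V₂ * V₂ = 1 := hV₂
  set P : H →L[ℂ] H := 1 - V₁ * adjoint V₁ with hPdef
  set Q : H →L[ℂ] H := V₂ * adjoint V₂ - (V₁ ∘L V₂) * adjoint (V₁ ∘L V₂) with hQdef
  have hVV : (V₁ ∘L V₂) * adjoint (V₁ ∘L V₂) = V₂ * (V₁ * adjoint V₁) * adjoint V₂ := by
    rw [show (V₁ ∘L V₂) * adjoint (V₁ ∘L V₂) = (V₂ ∘L V₁) * adjoint (V₂ ∘L V₁) by rw [hcomm],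
      ContinuousLinearMap.adjoint_comp]
    show V₂ * V₁ * (adjoint V₁ * adjoint V₂) = _
    noncomm_ring
  have hP : P * P = P := by
    have h : V₁ * adjoint V₁ * (V₁ * adjoint V₁) = V₁ * adjoint V₁ := by
      rw [mul_assoc V₁, ← mul_assoc (adjoint V₁), hV₁', one_mul]
    rw [hPdef]; noncomm_ring [h]
  have hQP : Q = V₂ * P * adjoint V₂ := by
    rw [hQdef, hVV, hPdef]; noncomm_ring
  have hQ : Q * Q = Q := by
    have h1 : V₂ * P * adjoint V₂ * (V₂ * P * adjoint V₂)
        = V₂ * (P * (adjoint V₂ * V₂) * P) * adjoint V₂ := by noncomm_ring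
    rw [hQP, h1, hV₂', mul_one, hP]
  have hCPQ : C = P - Q := by rw [hC, hPdef, hQdef]; noncomm_ring
  set B : H →L[ℂ] H := 1 - P - Q with hBdef
  have hanti : C * B = -(B * C) := by rw [hCPQ, hBdef]; noncomm_ring [hP, hQ]
  have hsq : B * B = 1 - C * C := by rw [hCPQ, hBdef]; noncomm_ring [hP, hQ]
  set r' : ℂ := (r : ℂ) with hr'def
  have hr2 : (1 : ℂ) - r' * r' ≠ 0 := by
    have h : ((1 - r * r : ℝ) : ℂ) ≠ 0 := by
      rw [Complex.ofReal_ne_zero]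
      nlinarith
    simpa [hr'def] using h
  -- membership characterizations
  have hmem₁ : ∀ x : H, x ∈ LinearMap.ker ((C - r' • (1 : H →L[ℂ] H) : H →L[ℂ] H) : H →ₗ[ℂ] H) ↔ C x = r' • x := by
    intro x
    simp [LinearMap.mem_ker, ContinuousLinearMap.sub_apply, ContinuousLinearMap.smul_apply,
      ContinuousLinearMap.one_apply, sub_eq_zero]
  have hmem₂ : ∀ x : H, x ∈ LinearMap.ker ((C + r' • (1 : H →L[ℂ] H) : H →L[ℂ] H) : H →ₗ[ℂ] H) ↔ C x = -(r' • x) := by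
    intro x
    simp [LinearMap.mem_ker, ContinuousLinearMap.add_apply, ContinuousLinearMap.smul_apply,
      ContinuousLinearMap.one_apply, add_eq_zero_iff_eq_neg]
  -- B swaps the eigenspaces
  have hBmap₁ : ∀ x : H, C x = r' • x → C (B x) = -(r' • B x) := by
    intro x hx
    calc C (B x) = (C * B) x := rfl
      _ = (-(B * C)) x := by rw [hanti]
      _ = -(B (C x)) := by simp [ContinuousLinearMap.mul_apply]
      _ = -(r' • B x) := by rw [hx, map_smul]
  have hBmap₂ : ∀ x : H, C x = -(r' • x) → C (B x) = r' • B x := by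
    intro x hx
    calc C (B x) = (C * B) x := rfl
      _ = (-(B * C)) x := by rw [hanti]
      _ = -(B (C x)) := by simp [ContinuousLinearMap.mul_apply]
      _ = r' • B x := by rw [hx]; simp [map_smul]
  have hBB₁ : ∀ x : H, C x = r' • x → B (B x) = ((1 : ℂ) - r' * r') • x := by
    intro x hx
    calc B (B x) = (B * B) x := rfl
      _ = ((1 : H →L[ℂ] H) - C * C) x := by rw [hsq]
      _ = x - C (C x) := by simp [ContinuousLinearMap.mul_apply]
      _ = ((1 : ℂ) - r' * r') • x := by
          rw [hx, map_smul, hx, smul_smul, sub_smul, one_smul]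
  have hBB₂ : ∀ x : H, C x = -(r' • x) → B (B x) = ((1 : ℂ) - r' * r') • x := by
    intro x hx
    calc B (B x) = (B * B) x := rfl
      _ = ((1 : H →L[ℂ] H) - C * C) x := by rw [hsq]
      _ = x - C (C x) := by simp [ContinuousLinearMap.mul_apply]
      _ = ((1 : ℂ) - r' * r') • x := by
          rw [hx, map_neg, map_smul, hx, smul_neg, neg_neg, smul_smul, sub_smul, one_smul]
  -- the linear map between the eigenspaces
  let f : ↥(LinearMap.ker ((C - r' • (1 : H →L[ℂ] H) : H →L[ℂ] H) : H →ₗ[ℂ] H)) →ₗ[ℂ]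
      ↥(LinearMap.ker ((C + r' • (1 : H →L[ℂ] H) : H →L[ℂ] H) : H →ₗ[ℂ] H)) :=
    { toFun := fun x => ⟨B x, (hmem₂ _).mpr (hBmap₁ _ ((hmem₁ _).mp x.2))⟩
      map_add' := fun x y => Subtype.ext (by
        show B ((x : H) + (y : H)) = B x + B y
        exact map_add B _ _)
      map_smul' := fun c x => Subtype.ext (by
        show B (c • (x : H)) = c • B x
        exact map_smul B c _) }
  have hf : ∀ x, (f x : H) = B x := fun _ => rfl
  have hinj : Function.Injective f := by
    intro x y hxy
    have h1 : B (x : H) = B (y : H) := by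
      have h := congrArg (Subtype.val) hxy
      rwa [hf, hf] at h
    have h2 : ((1 : ℂ) - r' * r') • (x : H) = ((1 : ℂ) - r' * r') • (y : H) := by
      rw [← hBB₁ _ ((hmem₁ _).mp x.2), ← hBB₁ _ ((hmem₁ _).mp y.2), h1]
    exact Subtype.ext (smul_right_injective H hr2 h2)
  have hsurj : Function.Surjective f := by
    rintro ⟨y, hy⟩
    have hyk : C y = -(r' • y) := (hmem₂ _).mp hy
    have hBy : B y ∈ LinearMap.ker ((C - r' • (1 : H →L[ℂ] H) : H →L[ℂ] H) : H →ₗ[ℂ] H) :=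
      (hmem₁ _).mpr (hBmap₂ _ hyk)
    refine ⟨⟨((1 : ℂ) - r' * r')⁻¹ • B y, Submodule.smul_mem _ _ hBy⟩, ?_⟩
    apply Subtype.ext
    show B (((1 : ℂ) - r' * r')⁻¹ • B y) = y
    rw [map_smul, hBB₂ _ hyk, smul_smul, inv_mul_cancel₀ hr2, one_smul]
  constructor
  · obtain ⟨x, hx, hx0⟩ := Submodule.ne_bot_iff _ |>.mp hev
    have hxk : C x = r' • x := (hmem₁ _).mp hx
    refine Submodule.ne_bot_iff _ |>.mpr ⟨B x, (hmem₂ _).mpr (hBmap₁ _ hxk), ?_⟩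
    intro h0
    have : ((1 : ℂ) - r' * r') • x = 0 := by rw [← hBB₁ _ hxk, h0, map_zero]
    exact hx0 ((smul_eq_zero.mp this).resolve_left hr2)
  · exact (LinearEquiv.ofBijective f ⟨hinj, hsurj⟩).rank_eq
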